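/- With G_n, Ĝ_n, and t_n as in the binary-tree construction: Z(G_n) = Z(Ĝ_n) = t_n + 1. -/

import Mathlib

/-- The zero forcing closure: vertices that eventually become black when the
vertices of `S` are initially black and we repeatedly apply the rule that a
white vertex `u` becomes black if it is the unique white neighbor of some black
vertex `v` (we say `v` forces `u`). -/
inductive ZFClosure {V : Type*} (G : SimpleGraph V) (S : Set V) : V → Prop
  | init (v : V) : v ∈ S → ZFClosure G S v
  | force (u v : V) : G.Adj v u → ZFClosure G S v →
      (∀ w, G.Adj v w → w ≠ u → ZFClosure G S w) → ZFClosure G S u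

/-- `S` is a zero forcing set of `G` if every vertex eventually becomes black. -/
def IsZeroForcingSet {V : Type*} (G : SimpleGraph V) (S : Set V) : Prop :=
  ∀ v, ZFClosure G S v

/-- The zero forcing number `Z(G)`: the minimum cardinality of a zero forcing set. -/
noncomputable def zeroForcingNumber {V : Type*} (G : SimpleGraph V) : ℕ :=
  sInf {k | ∃ S : Set V, S.ncard = k ∧ IsZeroForcingSet G S}

/-- One-sided edge relation of the subdivided `K₄`: vertices `a b c d e = 0 1 2 3 4`,
edges `ad, db, ac, cb, ae, eb, ce`; here `d = 3` is the subdivision vertex. -/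
def subK4Rel : Fin 5 → Fin 5 → Prop := fun x y =>
  (x, y) ∈ [((0 : Fin 5), (3 : Fin 5)), (3, 1), (0, 2), (2, 1), (0, 4), (4, 1), (2, 4)]

/-- The subdivided `K₄`: the complete graph on `{a, b, c, e}` with the edge `ab`
replaced by the path `a–d–b`. -/
def subK4 : SimpleGraph (Fin 5) := SimpleGraph.fromRel subK4Rel

/-- Vertices of the graph `G_{n+1}` of the binary-tree construction: `GV n` is
obtained from the complete binary tree `B_{2(n+1)-1}` by replacing every leaf with
a subdivided `K₄` (attached via its subdivision vertex `3`).  `GV 0` is a single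
subdivided `K₄`; `GV (n+1)` consists of a root, two middle vertices `mid b`
(the vertices `y_n^1, y_n^2`), and four copies `child b c` of `GV n`. -/
inductive GV : ℕ → Type
  | base : Fin 5 → GV 0
  | root {n : ℕ} : GV (n + 1)
  | mid {n : ℕ} : Bool → GV (n + 1)
  | child {n : ℕ} : Bool → Bool → GV n → GV (n + 1)

/-- The root `r_{n+1}` of `G_{n+1}` (for a single subdivided `K₄` it is the
subdivision vertex `3`). -/
def rootV : (n : ℕ) → GV n
  | 0 => .base 3
  | _ + 1 => .root

/-- One-sided edge relation of `G_{n+1}`: the root is joined to the two middle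
vertices, each middle vertex is joined to the roots of its two copies of the
previous construction, and each copy keeps its own edges. -/
def gAdj : {n : ℕ} → GV n → GV n → Prop
  | 0, .base i, .base j => subK4Rel i j
  | _ + 1, .root, .mid _ => True
  | n + 1, .mid b, .child b' _ x => b = b' ∧ x = rootV n
  | _ + 1, .child b c x, .child b' c' y => b = b' ∧ c = c' ∧ gAdj x y
  | _ + 1, _, _ => False

/-- The graph `G_{n+1}` of the binary-tree construction (the complete binary tree
`B_{2(n+1)-1}` with every leaf replaced by a subdivided `K₄`). -/
def Gtree (n : ℕ) : SimpleGraph (GV n) := SimpleGraph.fromRel gAdj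

/-- One-sided edge relation of `Ĝ_{n+1}`: `G_{n+1}` together with one extra pendant
vertex `none` (the vertex `y_{n+1}`) attached to the root. -/
def hatAdj (n : ℕ) : Option (GV n) → Option (GV n) → Prop
  | some x, some y => gAdj x y
  | none, some x => x = rootV n
  | _, _ => False

/-- The graph `Ĝ_{n+1}`: `G_{n+1}` with a new pendant vertex attached to the root. -/
def hatGtree (n : ℕ) : SimpleGraph (Option (GV n)) := SimpleGraph.fromRel (hatAdj n)

/-- The sequence `t_{n+1}` (0-indexed): `t 0 = t_1 = 2` and `t (n+1) = 4 * t n + 2`. -/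
def tseq : ℕ → ℕ
  | 0 => 2
  | n + 1 => 4 * tseq n + 2

section Machinery

variable {V : Type} (G : SimpleGraph V)

theorem ZFClosure.mono {S T : Set V} (hST : S ⊆ T) :
    ∀ {v}, ZFClosure G S v → ZFClosure G T v := by
  intro v h
  induction h with
  | init v hv => exact .init v (hST hv)
  | force u w hadj hw hprem ihw ihprem =>
      exact .force u w hadj ihw (fun x hx hne => ihprem x hx hne)

/-- one synchronous step of the forcing process -/
def stepS (B : Set V) : Set V :=
  B ∪ {u | ∃ v ∈ B, G.Adj v u ∧ ∀ w, G.Adj v w → w ≠ u → w ∈ B}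

def iterS (S : Set V) : ℕ → Set V
  | 0 => S
  | k + 1 => stepS G (iterS S k)

theorem iterS_subset_succ (S : Set V) (k : ℕ) : iterS G S k ⊆ iterS G S (k + 1) :=
  Set.subset_union_left

theorem iterS_mono_k (S : Set V) {j k : ℕ} (h : j ≤ k) : iterS G S j ⊆ iterS G S k := by
  induction h with
  | refl => exact subset_rfl
  | step _ ih => exact ih.trans (iterS_subset_succ G S _)

theorem iterS_mono_S {S T : Set V} (h : S ⊆ T) (k : ℕ) : iterS G S k ⊆ iterS G T k := by
  induction k with
  | zero => exact h
  | succ k ih =>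
      intro v hv
      rcases hv with hv | ⟨w, hw, hadj, hprem⟩
      · exact Or.inl (ih hv)
      · exact Or.inr ⟨w, ih hw, hadj, fun x hx hne => ih (hprem x hx hne)⟩

theorem iterS_subset_closure (S : Set V) (k : ℕ) :
    ∀ v ∈ iterS G S k, ZFClosure G S v := by
  induction k with
  | zero => exact fun v hv => .init v hv
  | succ k ih =>
      intro v hv
      rcases hv with hv | ⟨w, hw, hadj, hprem⟩
      · exact ih v hv
      · exact .force v w hadj (ih w hw) (fun x hx hne => ih x (hprem x hx hne))

theorem closure_iff_iterS [Fintype V] (S : Set V) (v : V) :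
    ZFClosure G S v ↔ ∃ k, v ∈ iterS G S k := by
  classical
  constructor
  · intro h
    induction h with
    | init v hv => exact ⟨0, hv⟩
    | force u w hadj hw hprem ihw ihprem =>
        obtain ⟨kw, hkw⟩ := ihw
        -- choose a bound for all premises
        have hch : ∀ x : V, ∃ k, (G.Adj w x → x ≠ u → x ∈ iterS G S k) := by
          intro x
          by_cases hx : G.Adj w x ∧ x ≠ u
          · obtain ⟨k, hk⟩ := ihprem x hx.1 hx.2
            exact ⟨k, fun _ _ => hk⟩
          · exact ⟨0, fun h1 h2 => absurd ⟨h1, h2⟩ hx⟩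
        choose f hf using hch
        refine ⟨(Finset.univ.sup f) + kw + 1, Or.inr ⟨w, ?_, hadj, ?_⟩⟩
        · exact iterS_mono_k G S (by omega) hkw
        · intro x hx hne
          exact iterS_mono_k G S (le_trans (Finset.le_sup (Finset.mem_univ x)) (by omega))
            (hf x hx hne)
  · rintro ⟨k, hk⟩
    exact iterS_subset_closure G S k v hk

end Machinery
section Instances

def gvEquiv0 : GV 0 ≃ Fin 5 where
  toFun := fun x => match x with | .base i => i
  invFun := .base
  left_inv := fun x => match x with | .base _ => rfl
  right_inv := fun _ => rfl

def gvEquivS (n : ℕ) : GV (n + 1) ≃ (Unit ⊕ Bool ⊕ Bool × Bool × GV n) where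
  toFun := fun x =>
    match x with
    | .root => Sum.inl ()
    | .mid b => Sum.inr (Sum.inl b)
    | .child b c y => Sum.inr (Sum.inr (b, c, y))
  invFun := fun x =>
    match x with
    | Sum.inl _ => .root
    | Sum.inr (Sum.inl b) => .mid b
    | Sum.inr (Sum.inr (b, c, y)) => .child b c y
  left_inv := fun x => by cases x <;> rfl
  right_inv := fun x => by rcases x with _ | (_ | ⟨b, c, y⟩) <;> rfl

def gvDecEq : (n : ℕ) → DecidableEq (GV n)
  | 0 => gvEquiv0.decidableEq
  | n + 1 => letI := gvDecEq n; (gvEquivS n).decidableEq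

instance : DecidableEq (GV n) := gvDecEq n

def gvFintype : (n : ℕ) → Fintype (GV n)
  | 0 => Fintype.ofEquiv _ gvEquiv0.symm
  | n + 1 => letI := gvFintype n; letI := gvDecEq n; Fintype.ofEquiv _ (gvEquivS n).symm

instance : Fintype (GV n) := gvFintype n

end Instances
section AdjLemmas

open SimpleGraph

-- definitional reduction lemmas for `gAdj`
theorem gAdj0 {i j : Fin 5} : gAdj (.base i) (.base j) ↔ subK4Rel i j := Iff.rfl
theorem gA_rm {n : ℕ} {b : Bool} : gAdj (n := n+1) .root (.mid b) := trivial
theorem gA_rr {n : ℕ} : ¬ gAdj (n := n+1) .root .root := fun h => h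
theorem gA_rc {n : ℕ} {b c : Bool} {x : GV n} : ¬ gAdj .root (.child b c x) := fun h => h
theorem gA_mr {n : ℕ} {b : Bool} : ¬ gAdj (n := n+1) (.mid b) .root := fun h => h
theorem gA_mm {n : ℕ} {b b' : Bool} : ¬ gAdj (n := n+1) (.mid b) (.mid b') := fun h => h
theorem gA_mc {n : ℕ} {b b' c : Bool} {x : GV n} :
    gAdj (.mid b) (.child b' c x) ↔ b = b' ∧ x = rootV n := Iff.rfl
theorem gA_cr {n : ℕ} {b c : Bool} {x : GV n} : ¬ gAdj (.child b c x) .root := fun h => h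
theorem gA_cm {n : ℕ} {b b' c : Bool} {x : GV n} : ¬ gAdj (.child b c x) (.mid b') := fun h => h
theorem gA_cc {n : ℕ} {b c b' c' : Bool} {x y : GV n} :
    gAdj (.child b c x) (.child b' c' y) ↔ b = b' ∧ c = c' ∧ gAdj x y := Iff.rfl

theorem adj_child_child {n : ℕ} {b c b' c' : Bool} {x y : GV n} :
    (Gtree (n + 1)).Adj (.child b c x) (.child b' c' y) ↔
      b = b' ∧ c = c' ∧ (Gtree n).Adj x y := by
  rw [Gtree, fromRel_adj, Gtree, fromRel_adj]
  constructor
  · rintro ⟨hne, (h | h)⟩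
    · obtain ⟨rfl, rfl, h2⟩ := gA_cc.mp h
      have hxy : x ≠ y := fun he => hne (congrArg (GV.child b c) he)
      exact ⟨rfl, rfl, hxy, Or.inl h2⟩
    · obtain ⟨hb, hc, h2⟩ := gA_cc.mp h
      subst hb; subst hc
      have hxy : x ≠ y := fun he => hne (congrArg (GV.child _ _) he)
      exact ⟨rfl, rfl, hxy, Or.inr h2⟩
  · rintro ⟨rfl, rfl, hne, h⟩
    have hcc : GV.child b c x ≠ GV.child b c y := by
      simp only [ne_eq, GV.child.injEq]
      tauto
    rcases h with h | h
    · exact ⟨hcc, Or.inl (gA_cc.mpr ⟨rfl, rfl, h⟩)⟩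
    · exact ⟨hcc, Or.inr (gA_cc.mpr ⟨rfl, rfl, h⟩)⟩

theorem adj_child_mid {n : ℕ} {b c b' : Bool} {x : GV n} :
    (Gtree (n + 1)).Adj (.child b c x) (.mid b') ↔ b' = b ∧ x = rootV n := by
  rw [Gtree, fromRel_adj]
  constructor
  · rintro ⟨-, (h | h)⟩
    · exact absurd h gA_cm
    · exact gA_mc.mp h
  · rintro ⟨rfl, rfl⟩
    have : GV.child b' c (rootV n) ≠ GV.mid b' := fun h => nomatch h
    exact ⟨this, Or.inr (gA_mc.mpr ⟨rfl, rfl⟩)⟩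

theorem not_adj_child_root {n : ℕ} {b c : Bool} {x : GV n} :
    ¬ (Gtree (n + 1)).Adj (.child b c x) .root := by
  rw [Gtree, fromRel_adj]
  rintro ⟨-, (h | h)⟩
  · exact gA_cr h
  · exact gA_rc h

theorem adj_root_iff {n : ℕ} {v : GV (n + 1)} :
    (Gtree (n + 1)).Adj .root v ↔ ∃ b, v = .mid b := by
  constructor
  · intro h
    cases v with
    | root => exact absurd h ((Gtree (n+1)).loopless.irrefl _)
    | mid b => exact ⟨b, rfl⟩
    | child b c x => exact absurd h.symm not_adj_child_root
  · rintro ⟨b, rfl⟩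
    rw [Gtree, fromRel_adj]
    have : (GV.root : GV (n+1)) ≠ GV.mid b := fun h => nomatch h
    exact ⟨this, Or.inl gA_rm⟩

theorem adj_mid_iff {n : ℕ} {b : Bool} {v : GV (n + 1)} :
    (Gtree (n + 1)).Adj (.mid b) v ↔ v = .root ∨ ∃ c, v = .child b c (rootV n) := by
  constructor
  · intro h
    cases v with
    | root => exact Or.inl rfl
    | mid b' =>
        rw [Gtree, fromRel_adj] at h
        rcases h with ⟨-, (h | h)⟩ <;> exact absurd h gA_mm
    | child b' c x =>
        obtain ⟨rfl, rfl⟩ := adj_child_mid.mp h.symm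
        exact Or.inr ⟨c, rfl⟩
  · rintro (rfl | ⟨c, rfl⟩)
    · exact (adj_root_iff.mpr ⟨b, rfl⟩).symm
    · exact (adj_child_mid.mpr ⟨rfl, rfl⟩).symm

theorem hat_adj_some_some {n : ℕ} {x y : GV n} :
    (hatGtree n).Adj (some x) (some y) ↔ (Gtree n).Adj x y := by
  rw [hatGtree, fromRel_adj, Gtree, fromRel_adj]
  constructor
  · rintro ⟨hne, (h | h)⟩
    · exact ⟨fun he => hne (by rw [he]), Or.inl h⟩
    · exact ⟨fun he => hne (by rw [he]), Or.inr h⟩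
  · rintro ⟨hne, h⟩
    exact ⟨fun he => hne (Option.some_injective _ he), h⟩

theorem hat_adj_none {n : ℕ} {v : Option (GV n)} :
    (hatGtree n).Adj none v ↔ v = some (rootV n) := by
  constructor
  · intro h
    cases v with
    | none => exact absurd h ((hatGtree n).loopless.irrefl _)
    | some x =>
        rw [hatGtree, fromRel_adj] at h
        rcases h with ⟨-, (h | h)⟩
        · exact congrArg some h
        · exact absurd h (fun hf => hf)
  · rintro rfl
    rw [hatGtree, fromRel_adj]
    have : (none : Option (GV n)) ≠ some (rootV n) := fun h => nomatch h
    exact ⟨this, Or.inl rfl⟩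

theorem hat_adj_some_none {n : ℕ} {x : GV n} :
    (hatGtree n).Adj (some x) none ↔ x = rootV n := by
  rw [SimpleGraph.adj_comm, hat_adj_none, Option.some.injEq]

theorem hat_adj_some_iff {n : ℕ} {x : GV n} {v : Option (GV n)} :
    (hatGtree n).Adj (some x) v ↔
      (∃ y, v = some y ∧ (Gtree n).Adj x y) ∨ (x = rootV n ∧ v = none) := by
  cases v with
  | none => simp [hat_adj_some_none]
  | some y => simp [hat_adj_some_some]

end AdjLemmas
section FinClose

variable {V : Type} [Fintype V] [DecidableEq V] (G : SimpleGraph V) [DecidableRel G.Adj]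

def fstep (B : Finset V) : Finset V :=
  B ∪ Finset.univ.filter
    (fun u => ∃ v ∈ B, G.Adj v u ∧ ∀ w, G.Adj v w → w ≠ u → w ∈ B)

theorem subset_fstep (B : Finset V) : B ⊆ fstep G B := Finset.subset_union_left

def closeF (S : Finset V) : Finset V := (fstep G)^[Fintype.card V] S

theorem iterate_stable {α : Type} (f : α → α) {k : ℕ} {x : α} (h : f (f^[k] x) = f^[k] x) :
    ∀ j, k ≤ j → f^[j] x = f^[k] x := by
  intro j hj
  induction hj with
  | refl => rfl
  | step h2 ih =>
      rw [Function.iterate_succ_apply', ih, h]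

theorem fstep_fixed (S : Finset V) : fstep G (closeF G S) = closeF G S := by
  by_cases hex : ∃ k ≤ Fintype.card V, fstep G ((fstep G)^[k] S) = (fstep G)^[k] S
  · obtain ⟨k, hk, hfix⟩ := hex
    have h1 : (fstep G)^[Fintype.card V] S = (fstep G)^[k] S :=
      iterate_stable (fstep G) hfix _ hk
    show fstep G ((fstep G)^[Fintype.card V] S) = (fstep G)^[Fintype.card V] S
    rw [h1, hfix]
  · exfalso
    push_neg at hex
    have hcard : ∀ k, k ≤ Fintype.card V + 1 → k ≤ ((fstep G)^[k] S).card := by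
      intro k hk
      induction k with
      | zero => omega
      | succ k ih =>
          have h1 := hex k (by omega)
          have h2 : (fstep G)^[k] S ⊂ (fstep G)^[k+1] S := by
            rw [Function.iterate_succ_apply']
            exact Finset.ssubset_iff_subset_ne.mpr ⟨subset_fstep G _, fun he => h1 he.symm⟩
          have := Finset.card_lt_card h2
          have := ih (by omega)
          omega
    have := hcard (Fintype.card V + 1) le_rfl
    have := Finset.card_le_univ ((fstep G)^[Fintype.card V + 1] S)
    omega

theorem mem_closeF_of_zfc {S : Finset V} {v : V} (h : ZFClosure G ↑S v) :
    v ∈ closeF G S := by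
  have hsub : S ⊆ closeF G S := by
    unfold closeF
    generalize Fintype.card V = m
    induction m with
    | zero => exact subset_rfl
    | succ m ih =>
        rw [Function.iterate_succ_apply']
        exact ih.trans (subset_fstep G _)
  induction h with
  | init v hv => exact hsub hv
  | force u w hadj hw hprem ihw ihprem =>
      have : u ∈ fstep G (closeF G S) := by
        unfold fstep
        refine Finset.mem_union_right _ (Finset.mem_filter.mpr ⟨Finset.mem_univ _, ?_⟩)
        exact ⟨w, ihw, hadj, fun x hx hne => ihprem x hx hne⟩
      rwa [fstep_fixed] at this

theorem zfc_of_mem_closeF {S : Finset V} {v : V} (h : v ∈ closeF G S) :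
    ZFClosure G ↑S v := by
  unfold closeF at h
  generalize hm : Fintype.card V = m at h
  clear hm
  induction m generalizing v with
  | zero => exact .init v h
  | succ m ih =>
      rw [Function.iterate_succ_apply'] at h
      rcases Finset.mem_union.mp h with h | h
      · exact ih h
      · obtain ⟨-, w, hw, hadj, hprem⟩ := Finset.mem_filter.mp h
        exact .force v w hadj (ih hw) (fun x hx hne => ih (hprem x hx hne))

theorem mem_closeF_iff {S : Finset V} {v : V} :
    v ∈ closeF G S ↔ ZFClosure G ↑S v :=
  ⟨zfc_of_mem_closeF G, mem_closeF_of_zfc G⟩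

end FinClose

section IsoTransfer

theorem zfc_map {V V' : Type} {G : SimpleGraph V} {G' : SimpleGraph V'} (e : V ≃ V')
    (he : ∀ x y, G.Adj x y ↔ G'.Adj (e x) (e y)) {S : Set V} {v : V}
    (h : ZFClosure G S v) : ZFClosure G' (e '' S) (e v) := by
  induction h with
  | init v hv => exact .init _ ⟨v, hv, rfl⟩
  | force u w hadj hw hprem ihw ihprem =>
      refine .force (e u) (e w) ((he w u).mp hadj) ihw ?_
      intro u' hadj' hne
      have h1 : G.Adj w (e.symm u') := by
        rw [he]
        rwa [e.apply_symm_apply]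
      have h2 : e.symm u' ≠ u := fun hh => hne (by rw [← hh, e.apply_symm_apply])
      have := ihprem _ h1 h2
      rwa [e.apply_symm_apply] at this

end IsoTransfer
section Invariants

/-- `φ` embeds `G_n` into `H` as an "attached copy": adjacency is preserved and
reflected, and the only vertex of the copy that may have outside neighbours is
the root. -/
def IsCopy (n : ℕ) {V' : Type} (H : SimpleGraph V') (φ : GV n → V') : Prop :=
  Function.Injective φ ∧ (∀ x y, H.Adj (φ x) (φ y) ↔ (Gtree n).Adj x y) ∧
  (∀ x u, H.Adj (φ x) u → (∀ y, u ≠ φ y) → x = rootV n)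

def U1 (n : ℕ) : Prop :=
  ∃ W : Finset (GV n), W.card = tseq n + 1 ∧
    ∀ (V' : Type) (H : SimpleGraph V') (φ : GV n → V') (S : Set V'),
      IsCopy n H φ → (∀ w ∈ W, ZFClosure H S (φ w)) → ∀ x, ZFClosure H S (φ x)

def U2 (n : ℕ) : Prop :=
  ∃ A : Finset (GV n), A.card = tseq n ∧
    ∀ (V' : Type) (H : SimpleGraph V') (φ : GV n → V') (S : Set V'),
      IsCopy n H φ →
      (∀ u, H.Adj (φ (rootV n)) u → (∀ y, u ≠ φ y) → ZFClosure H S u) →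
      ZFClosure H S (φ (rootV n)) →
      (∀ a ∈ A, ZFClosure H S (φ a)) → ∀ x, ZFClosure H S (φ x)

def L3 (n : ℕ) : Prop := ∀ X : Set (GV n),
  (∀ x, ZFClosure (hatGtree n) (some '' X ∪ {none}) (some x)) → tseq n ≤ X.ncard

def L4 (n : ℕ) : Prop := ∀ X : Set (GV n),
  (∀ x, ZFClosure (hatGtree n) (some '' X ∪ {none}) (some x)) → rootV n ∈ X →
    tseq n + 1 ≤ X.ncard

def L5 (n : ℕ) : Prop := ∀ X : Set (GV n),
  (∀ x, ZFClosure (hatGtree n) (some '' X ∪ {none}) (some x)) →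
  ZFClosure (hatGtree n) (some '' X) (some (rootV n)) → tseq n + 1 ≤ X.ncard

/-- forcing inside an attached copy -/
theorem copy_force {n : ℕ} {V' : Type} {H : SimpleGraph V'} {φ : GV n → V'}
    (hc : IsCopy n H φ) {S : Set V'} (v u : GV n) (hadj : (Gtree n).Adj v u)
    (hv : ZFClosure H S (φ v))
    (hprem : ∀ y, (Gtree n).Adj v y → y ≠ u → ZFClosure H S (φ y))
    (hroot : v = rootV n → ∀ w, H.Adj (φ v) w → (∀ y, w ≠ φ y) → ZFClosure H S w) :
    ZFClosure H S (φ u) := by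
  refine .force (φ u) (φ v) ((hc.2.1 v u).mpr hadj) hv ?_
  intro w hw hne
  by_cases hex : ∃ y, w = φ y
  · obtain ⟨y, rfl⟩ := hex
    exact hprem y ((hc.2.1 v y).mp hw) (fun h => hne (congrArg φ h))
  · push_neg at hex
    exact hroot (hc.2.2 v w hw hex) w hw hex

end Invariants

section BaseCase

instance : DecidableRel subK4Rel := fun a b => by unfold subK4Rel; infer_instance

def decGAdj0 : DecidableRel (gAdj (n := 0))
  | .base i, .base j => decidable_of_iff (subK4Rel i j) Iff.rfl

instance : DecidableRel (gAdj (n := 0)) := decGAdj0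

instance : DecidableRel (Gtree 0).Adj := fun a b =>
  decidable_of_iff _ (SimpleGraph.fromRel_adj gAdj a b).symm

def decHatAdj0 : DecidableRel (hatAdj 0)
  | some (.base i), some (.base j) => decidable_of_iff (subK4Rel i j) Iff.rfl
  | none, some (.base i) => decidable_of_iff (GV.base i = rootV 0) Iff.rfl
  | some (.base _), none => .isFalse (fun h => h)
  | none, none => .isFalse (fun h => h)

instance : DecidableRel (hatAdj 0) := decHatAdj0

instance : DecidableRel (hatGtree 0).Adj := fun a b =>
  decidable_of_iff _ (SimpleGraph.fromRel_adj (hatAdj 0) a b).symm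

def hatRel0 : Fin 6 → Fin 6 → Prop := fun x y =>
  (x, y) ∈ [((0:Fin 6),3),(3,1),(0,2),(2,1),(0,4),(4,1),(2,4),(5,3)]

instance : DecidableRel hatRel0 := fun a b => by unfold hatRel0; infer_instance

def hatF : SimpleGraph (Fin 6) := SimpleGraph.fromRel hatRel0

instance : DecidableRel hatF.Adj := fun a b =>
  decidable_of_iff _ (SimpleGraph.fromRel_adj hatRel0 a b).symm

def e0 : Option (GV 0) ≃ Fin 6 :=
  (Equiv.optionCongr gvEquiv0).trans finSuccEquivLast.symm

theorem he0 : ∀ x y : Option (GV 0), (hatGtree 0).Adj x y ↔ hatF.Adj (e0 x) (e0 y) := by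
  decide

def f0 : GV 0 → Fin 6 := fun g => e0 (some g)

theorem f0_inj : Function.Injective f0 :=
  fun a b h => Option.some_injective _ (e0.injective h)

set_option maxRecDepth 40000 in
theorem C3 : ∀ Y : Finset (Fin 6), Y.card ≤ 1 →
    ¬ (∀ v : Fin 6, v ≠ 5 → v ∈ closeF hatF (Y ∪ {5})) := by decide

set_option maxRecDepth 40000 in
theorem C4 : ∀ Y : Finset (Fin 6), Y.card ≤ 2 → (3 : Fin 6) ∈ Y →
    ¬ (∀ v : Fin 6, v ≠ 5 → v ∈ closeF hatF (Y ∪ {5})) := by decide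

set_option maxRecDepth 40000 in
theorem C5 : ∀ Y : Finset (Fin 6), Y.card ≤ 2 →
    ¬ ((∀ v : Fin 6, v ≠ 5 → v ∈ closeF hatF (Y ∪ {5})) ∧
        (3 : Fin 6) ∈ closeF hatF Y) := by decide

/-- data transferred to the concrete model -/
theorem base_model (X : Set (GV 0))
    (hfull : ∀ x, ZFClosure (hatGtree 0) (some '' X ∪ {none}) (some x)) :
    ∃ Y : Finset (Fin 6), Y.card = X.ncard ∧ (↑Y : Set (Fin 6)) = f0 '' X ∧
      (∀ v : Fin 6, v ≠ 5 → v ∈ closeF hatF (Y ∪ {5})) := by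
  have hfin : (f0 '' X).Finite := Set.toFinite _
  refine ⟨hfin.toFinset, ?_, hfin.coe_toFinset, ?_⟩
  · rw [← Set.ncard_eq_toFinset_card _ hfin, Set.ncard_image_of_injective _ f0_inj]
  · intro v hv
    obtain ⟨x, hx⟩ : ∃ x : GV 0, e0 (some x) = v := by
      rcases he : e0.symm v with _ | x
      · exfalso
        apply hv
        have := congrArg e0 he
        rw [e0.apply_symm_apply] at this
        rw [this]
        decide
      · refine ⟨x, ?_⟩
        have := congrArg e0 he
        rw [e0.apply_symm_apply] at this
        exact this.symm
    have h1 := zfc_map e0 he0 (hfull x)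
    rw [hx] at h1
    apply mem_closeF_of_zfc
    have himg : e0 '' (some '' X ∪ {none}) = ↑(hfin.toFinset ∪ {5}) := by
      rw [Set.image_union, ← Set.image_comp, Set.image_singleton,
        Finset.coe_union, Finset.coe_singleton, hfin.coe_toFinset]
      have : e0 none = 5 := by decide
      rw [this]
      rfl
    rwa [himg] at h1

theorem L3_base : L3 0 := by
  intro X hfull
  by_contra h
  obtain ⟨Y, hYcard, -, hYfull⟩ := base_model X hfull
  have ht : tseq 0 = 2 := rfl
  exact C3 Y (by omega) hYfull

theorem L4_base : L4 0 := by
  intro X hfull hroot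
  by_contra h
  obtain ⟨Y, hYcard, hYcoe, hYfull⟩ := base_model X hfull
  have ht : tseq 0 = 2 := rfl
  refine C4 Y (by omega) ?_ hYfull
  have : f0 (rootV 0) ∈ f0 '' X := ⟨_, hroot, rfl⟩
  rw [← hYcoe] at this
  have h3 : f0 (rootV 0) = 3 := by decide
  rw [h3] at this
  exact_mod_cast this

theorem L5_base : L5 0 := by
  intro X hfull hroot
  by_contra h
  obtain ⟨Y, hYcard, hYcoe, hYfull⟩ := base_model X hfull
  have ht : tseq 0 = 2 := rfl
  refine C5 Y (by omega) ⟨hYfull, ?_⟩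
  have h1 := zfc_map e0 he0 hroot
  have h3 : e0 (some (rootV 0)) = 3 := by decide
  rw [h3] at h1
  rw [← Set.image_comp] at h1
  apply mem_closeF_of_zfc
  rwa [hYcoe]

end BaseCase
section BaseUpper

theorem U1_base : U1 0 := by
  refine ⟨{.base 0, .base 2, .base 4}, by decide, ?_⟩
  intro V' H φ S hc hW
  have h0 : ZFClosure H S (φ (.base 0)) := hW _ (by decide)
  have h2 : ZFClosure H S (φ (.base 2)) := hW _ (by decide)
  have h4 : ZFClosure H S (φ (.base 4)) := hW _ (by decide)
  have h1 : ZFClosure H S (φ (.base 1)) := by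
    refine copy_force hc (.base 2) (.base 1) (by decide) h2 ?_ ?_
    · intro y hy hne
      have hy2 : y = .base 0 ∨ y = .base 4 := by revert hy hne; revert y; decide
      rcases hy2 with rfl | rfl <;> assumption
    · intro h; exact absurd h (by decide)
  have h3 : ZFClosure H S (φ (.base 3)) := by
    refine copy_force hc (.base 0) (.base 3) (by decide) h0 ?_ ?_
    · intro y hy hne
      have hy2 : y = .base 2 ∨ y = .base 4 := by revert hy hne; revert y; decide
      rcases hy2 with rfl | rfl <;> assumption
    · intro h; exact absurd h (by decide)
  intro x
  have : ∀ i : Fin 5, ZFClosure H S (φ (.base i)) := by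
    intro i
    fin_cases i <;> assumption
  cases x with | base i => exact this i

theorem U2_base : U2 0 := by
  refine ⟨{.base 0, .base 2}, by decide, ?_⟩
  intro V' H φ S hc hN hr hA
  have h0 : ZFClosure H S (φ (.base 0)) := hA _ (by decide)
  have h2 : ZFClosure H S (φ (.base 2)) := hA _ (by decide)
  have h3 : ZFClosure H S (φ (.base 3)) := hr
  have h1 : ZFClosure H S (φ (.base 1)) := by
    refine copy_force hc (.base 3) (.base 1) (by decide) h3 ?_ ?_
    · intro y hy hne
      have hy2 : y = .base 0 := by revert hy hne; revert y; decide
      rw [hy2]; exact h0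
    · intro _
      exact hN
  have h4 : ZFClosure H S (φ (.base 4)) := by
    refine copy_force hc (.base 0) (.base 4) (by decide) h0 ?_ ?_
    · intro y hy hne
      have hy2 : y = .base 2 ∨ y = .base 3 := by revert hy hne; revert y; decide
      rcases hy2 with rfl | rfl <;> assumption
    · intro h; exact absurd h (by decide)
  intro x
  have : ∀ i : Fin 5, ZFClosure H S (φ (.base i)) := by
    intro i
    fin_cases i <;> assumption
  cases x with | base i => exact this i

end BaseUpper
section UpperStep

variable {n : ℕ} {V' : Type} {H : SimpleGraph V'} {φ : GV (n+1) → V'}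

theorem isCopy_comp (hc : IsCopy (n+1) H φ) (b c : Bool) :
    IsCopy n H (fun x => φ (.child b c x)) := by
  obtain ⟨hinj, hadj, hout⟩ := hc
  refine ⟨?_, ?_, ?_⟩
  · intro x y h
    have h2 := hinj h
    simp only [GV.child.injEq] at h2
    exact h2.2.2
  · intro x y
    rw [hadj, adj_child_child]
    constructor
    · exact fun h => h.2.2
    · exact fun h => ⟨rfl, rfl, h⟩
  · intro x u hu hny
    by_cases hex : ∃ z, u = φ z
    · obtain ⟨z, rfl⟩ := hex
      have hz := (hadj _ _).mp hu
      cases z with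
      | root => exact absurd hz not_adj_child_root
      | mid b' =>
          obtain ⟨rfl, hx⟩ := adj_child_mid.mp hz
          exact hx
      | child b' c' y =>
          obtain ⟨rfl, rfl, -⟩ := adj_child_child.mp hz
          exact absurd rfl (hny y)
    · push_neg at hex
      have := hout _ u hu hex
      exact absurd this (fun h => nomatch h)

/-- outside neighbours (w.r.t. the sub-copy `child b c`) of the sub-copy root are
`φ (mid b)` -/
theorem child_out (hc : IsCopy (n+1) H φ) (b c : Bool) :
    ∀ u, H.Adj (φ (.child b c (rootV n))) u → (∀ y, u ≠ φ (.child b c y)) →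
      u = φ (.mid b) := by
  intro u hadj hny
  by_cases hex : ∃ z, u = φ z
  · obtain ⟨z, rfl⟩ := hex
    have hz := (hc.2.1 _ _).mp hadj
    cases z with
    | root => exact absurd hz not_adj_child_root
    | mid b' =>
        obtain ⟨rfl, -⟩ := adj_child_mid.mp hz
        rfl
    | child b' c' y =>
        obtain ⟨rfl, rfl, -⟩ := adj_child_child.mp hz
        exact absurd rfl (hny y)
  · push_neg at hex
    have := hc.2.2 _ u hadj hex
    exact absurd this (fun h => nomatch h)

/-- once a whole sub-copy is black, its root forces the middle vertex -/
theorem force_mid (hc : IsCopy (n+1) H φ) {S : Set V'} (b c : Bool)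
    (hcopy : ∀ x : GV n, ZFClosure H S (φ (.child b c x))) :
    ZFClosure H S (φ (.mid b)) := by
  refine .force _ (φ (.child b c (rootV n)))
    ((hc.2.1 _ _).mpr (adj_child_mid.mpr ⟨rfl, rfl⟩)) (hcopy _) ?_
  intro w hw hne
  by_cases hex : ∃ z, w = φ z
  · obtain ⟨z, rfl⟩ := hex
    have hz := (hc.2.1 _ _).mp hw
    cases z with
    | root => exact absurd hz not_adj_child_root
    | mid b' =>
        obtain ⟨rfl, -⟩ := adj_child_mid.mp hz
        exact absurd rfl hne
    | child b' c' y =>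
        obtain ⟨rfl, rfl, -⟩ := adj_child_child.mp hz
        exact hcopy y
  · push_neg at hex
    have := hc.2.2 _ w hw hex
    exact absurd this (fun h => nomatch h)

/-- the mid vertex forces its remaining white neighbour -/
theorem force_by_mid (hc : IsCopy (n+1) H φ) {S : Set V'} (b : Bool)
    (hmid : ZFClosure H S (φ (.mid b))) {u : GV (n+1)}
    (hadj : (Gtree (n+1)).Adj (.mid b) u)
    (hothers : ∀ z, (Gtree (n+1)).Adj (.mid b) z → z ≠ u → ZFClosure H S (φ z)) :
    ZFClosure H S (φ u) := by
  refine copy_force hc (.mid b) u hadj hmid hothers ?_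
  intro h
  exact absurd h (fun hh => nomatch hh)

theorem mid_nbrs {b : Bool} {z : GV (n+1)} (h : (Gtree (n+1)).Adj (.mid b) z) :
    z = .root ∨ z = .child b true (rootV n) ∨ z = .child b false (rootV n) := by
  rcases adj_mid_iff.mp h with h | ⟨c, rfl⟩
  · exact Or.inl h
  · cases c
    · exact Or.inr (Or.inr rfl)
    · exact Or.inr (Or.inl rfl)

theorem upper_step (hU1 : U1 n) (hU2 : U2 n) : U1 (n+1) ∧ U2 (n+1) := by
  obtain ⟨W, hWcard, hW⟩ := hU1
  obtain ⟨A, hAcard, hA⟩ := hU2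
  have hdisj : ∀ (b c b' c' : Bool) (F F' : Finset (GV n)), (b, c) ≠ (b', c') →
      Disjoint (F.image (GV.child b c)) (F'.image (GV.child b' c')) := by
    intro b c b' c' F F' hne
    rw [Finset.disjoint_left]
    rintro a ha ha'
    obtain ⟨x, -, rfl⟩ := Finset.mem_image.mp ha
    obtain ⟨y, -, hxy⟩ := Finset.mem_image.mp ha'
    simp only [GV.child.injEq] at hxy
    exact hne (by rw [hxy.1, hxy.2.1])
  have hcardim : ∀ (b c : Bool) (F : Finset (GV n)), (F.image (GV.child b c)).card = F.card := by
    intro b c F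
    apply Finset.card_image_of_injective
    intro x y h
    simp only [GV.child.injEq] at h
    exact h.2.2
  -- the common completion argument
  have main : ∀ (V' : Type) (H : SimpleGraph V') (φ : GV (n+1) → V') (S : Set V'),
      IsCopy (n+1) H φ →
      (∀ w ∈ W, ZFClosure H S (φ (.child true true w))) →
      (∀ w ∈ W, ZFClosure H S (φ (.child false true w))) →
      ((∀ w ∈ W, ZFClosure H S (φ (.child true false w))) ∨
        (ZFClosure H S (φ .root) ∧ ∀ a ∈ A, ZFClosure H S (φ (.child true false a)))) →
      (∀ a ∈ A, ZFClosure H S (φ (.child false false a))) →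
      ∀ x, ZFClosure H S (φ x) := by
    intro V' H φ S hc hTT hFT hTF hFF
    have cTT : ∀ x : GV n, ZFClosure H S (φ (.child true true x)) :=
      hW V' H _ S (isCopy_comp hc true true) hTT
    have cFT : ∀ x : GV n, ZFClosure H S (φ (.child false true x)) :=
      hW V' H _ S (isCopy_comp hc false true) hFT
    have hmT : ZFClosure H S (φ (.mid true)) := force_mid hc true true cTT
    have hmF : ZFClosure H S (φ (.mid false)) := force_mid hc false true cFT
    have cTF : ∀ x : GV n, ZFClosure H S (φ (.child true false x)) := by
      rcases hTF with hTF | ⟨hR, hTF⟩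
      · exact hW V' H _ S (isCopy_comp hc true false) hTF
      · have hrTF : ZFClosure H S (φ (.child true false (rootV n))) := by
          refine force_by_mid hc true hmT (adj_mid_iff.mpr (Or.inr ⟨false, rfl⟩)) ?_
          intro z hz hne
          rcases mid_nbrs hz with rfl | rfl | rfl
          · exact hR
          · exact cTT _
          · exact absurd rfl hne
        refine hA V' H _ S (isCopy_comp hc true false) ?_ hrTF hTF
        intro u hu hny
        have := child_out hc true false u hu hny
        rw [this]
        exact hmT
    have hR : ZFClosure H S (φ .root) := by
      rcases hTF with hTF | ⟨hR, -⟩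
      · refine force_by_mid hc true hmT (adj_mid_iff.mpr (Or.inl rfl)) ?_
        intro z hz hne
        rcases mid_nbrs hz with rfl | rfl | rfl
        · exact absurd rfl hne
        · exact cTT _
        · exact cTF _
      · exact hR
    have hrFF : ZFClosure H S (φ (.child false false (rootV n))) := by
      refine force_by_mid hc false hmF (adj_mid_iff.mpr (Or.inr ⟨false, rfl⟩)) ?_
      intro z hz hne
      rcases mid_nbrs hz with rfl | rfl | rfl
      · exact hR
      · exact cFT _
      · exact absurd rfl hne
    have cFF : ∀ x : GV n, ZFClosure H S (φ (.child false false x)) := by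
      refine hA V' H _ S (isCopy_comp hc false false) ?_ hrFF hFF
      intro u hu hny
      have := child_out hc false false u hu hny
      rw [this]
      exact hmF
    intro x
    cases x with
    | root => exact hR
    | mid b =>
        cases b
        · exact hmF
        · exact hmT
    | child b c y =>
        cases b <;> cases c
        · exact cFF y
        · exact cFT y
        · exact cTF y
        · exact cTT y
  constructor
  · refine ⟨W.image (GV.child true true) ∪ W.image (GV.child true false) ∪
      W.image (GV.child false true) ∪ A.image (GV.child false false), ?_, ?_⟩
    · rw [Finset.card_union_of_disjoint, Finset.card_union_of_disjoint,
        Finset.card_union_of_disjoint]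
      · rw [hcardim, hcardim, hcardim, hcardim, hWcard, hAcard]
        show _ = tseq (n+1) + 1
        simp only [tseq]
        ring
      · exact hdisj _ _ _ _ _ _ (by decide)
      · rw [Finset.disjoint_union_left]
        exact ⟨hdisj _ _ _ _ _ _ (by decide), hdisj _ _ _ _ _ _ (by decide)⟩
      · rw [Finset.disjoint_union_left, Finset.disjoint_union_left]
        exact ⟨⟨hdisj _ _ _ _ _ _ (by decide), hdisj _ _ _ _ _ _ (by decide)⟩,
          hdisj _ _ _ _ _ _ (by decide)⟩
    · intro V' H φ S hc hW'
      have hmem : ∀ (b c : Bool) (F : Finset (GV n)) (w : GV n), w ∈ F →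
          (GV.child b c w) ∈ F.image (GV.child b c) :=
        fun b c F w hw => Finset.mem_image.mpr ⟨w, hw, rfl⟩
      refine main V' H φ S hc ?_ ?_ (Or.inl ?_) ?_ <;> intro w hw
      · exact hW' _ (by
          refine Finset.mem_union_left _ (Finset.mem_union_left _ (Finset.mem_union_left _ ?_))
          exact hmem _ _ _ _ hw)
      · exact hW' _ (by
          refine Finset.mem_union_left _ (Finset.mem_union_right _ ?_)
          exact hmem _ _ _ _ hw)
      · exact hW' _ (by
          refine Finset.mem_union_left _ (Finset.mem_union_left _ (Finset.mem_union_right _ ?_))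
          exact hmem _ _ _ _ hw)
      · exact hW' _ (Finset.mem_union_right _ (hmem _ _ _ _ hw))
  · refine ⟨W.image (GV.child true true) ∪ A.image (GV.child true false) ∪
      W.image (GV.child false true) ∪ A.image (GV.child false false), ?_, ?_⟩
    · rw [Finset.card_union_of_disjoint, Finset.card_union_of_disjoint,
        Finset.card_union_of_disjoint]
      · rw [hcardim, hcardim, hcardim, hcardim, hWcard, hAcard]
        show _ = tseq (n+1)
        simp only [tseq]
        ring
      · exact hdisj _ _ _ _ _ _ (by decide)
      · rw [Finset.disjoint_union_left]
        exact ⟨hdisj _ _ _ _ _ _ (by decide), hdisj _ _ _ _ _ _ (by decide)⟩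
      · rw [Finset.disjoint_union_left, Finset.disjoint_union_left]
        exact ⟨⟨hdisj _ _ _ _ _ _ (by decide), hdisj _ _ _ _ _ _ (by decide)⟩,
          hdisj _ _ _ _ _ _ (by decide)⟩
    · intro V' H φ S hc hN hr hA'
      have hmem : ∀ (b c : Bool) (F : Finset (GV n)) (w : GV n), w ∈ F →
          (GV.child b c w) ∈ F.image (GV.child b c) :=
        fun b c F w hw => Finset.mem_image.mpr ⟨w, hw, rfl⟩
      refine main V' H φ S hc ?_ ?_ (Or.inr ⟨hr, ?_⟩) ?_ <;> intro w hw
      · exact hA' _ (by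
          refine Finset.mem_union_left _ (Finset.mem_union_left _ (Finset.mem_union_left _ ?_))
          exact hmem _ _ _ _ hw)
      · exact hA' _ (by
          refine Finset.mem_union_left _ (Finset.mem_union_right _ ?_)
          exact hmem _ _ _ _ hw)
      · exact hA' _ (by
          refine Finset.mem_union_left _ (Finset.mem_union_left _ (Finset.mem_union_right _ ?_))
          exact hmem _ _ _ _ hw)
      · exact hA' _ (Finset.mem_union_right _ (hmem _ _ _ _ hw))

end UpperStep
section LowerNbrs

variable {n : ℕ}

/-- abbreviations for the vertices of `Ĝ_{n+2}` -/
def cp (b c : Bool) (x : GV n) : Option (GV (n+1)) := some (.child b c x)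
def Mv (n : ℕ) (b : Bool) : Option (GV (n+1)) := some (.mid b)
def Rv (n : ℕ) : Option (GV (n+1)) := some .root

theorem NB1 {b c : Bool} {x : GV n} {v : Option (GV (n+1))} :
    (hatGtree (n+1)).Adj (cp b c x) v ↔
      (∃ y, v = cp b c y ∧ (Gtree n).Adj x y) ∨ (x = rootV n ∧ v = Mv n b) := by
  rw [cp, hat_adj_some_iff]
  constructor
  · rintro (⟨z, rfl, hz⟩ | ⟨h, -⟩)
    · cases z with
      | root => exact absurd hz not_adj_child_root
      | mid b' =>
          obtain ⟨rfl, hx⟩ := adj_child_mid.mp hz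
          exact Or.inr ⟨hx, rfl⟩
      | child b' c' y =>
          obtain ⟨rfl, rfl, h⟩ := adj_child_child.mp hz
          exact Or.inl ⟨y, rfl, h⟩
    · exact absurd h (fun hh => nomatch hh)
  · rintro (⟨y, rfl, h⟩ | ⟨rfl, rfl⟩)
    · exact Or.inl ⟨.child b c y, rfl, adj_child_child.mpr ⟨rfl, rfl, h⟩⟩
    · exact Or.inl ⟨.mid b, rfl, adj_child_mid.mpr ⟨rfl, rfl⟩⟩

theorem NB2 {b : Bool} {v : Option (GV (n+1))} :
    (hatGtree (n+1)).Adj (Mv n b) v ↔ v = Rv n ∨ ∃ c, v = cp b c (rootV n) := by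
  rw [Mv, hat_adj_some_iff]
  constructor
  · rintro (⟨z, rfl, hz⟩ | ⟨h, -⟩)
    · rcases adj_mid_iff.mp hz with rfl | ⟨c, rfl⟩
      · exact Or.inl rfl
      · exact Or.inr ⟨c, rfl⟩
    · exact absurd h (fun hh => nomatch hh)
  · rintro (rfl | ⟨c, rfl⟩)
    · exact Or.inl ⟨.root, rfl, adj_mid_iff.mpr (Or.inl rfl)⟩
    · exact Or.inl ⟨.child b c (rootV n), rfl, adj_mid_iff.mpr (Or.inr ⟨c, rfl⟩)⟩

theorem NB3 {v : Option (GV (n+1))} :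
    (hatGtree (n+1)).Adj (Rv n) v ↔ v = none ∨ ∃ b, v = Mv n b := by
  rw [Rv, hat_adj_some_iff]
  constructor
  · rintro (⟨z, rfl, hz⟩ | ⟨-, rfl⟩)
    · obtain ⟨b, rfl⟩ := adj_root_iff.mp hz
      exact Or.inr ⟨b, rfl⟩
    · exact Or.inl rfl
  · rintro (rfl | ⟨b, rfl⟩)
    · exact Or.inr ⟨rfl, rfl⟩
    · exact Or.inl ⟨.mid b, rfl, adj_root_iff.mpr ⟨b, rfl⟩⟩

theorem NB4 {v : Option (GV (n+1))} :
    (hatGtree (n+1)).Adj none v ↔ v = Rv n := by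
  rw [hat_adj_none]; rfl

end LowerNbrs

section TimeMachinery

variable {V : Type} [Fintype V] {G : SimpleGraph V} {S : Set V}

theorem exists_first {v : V} (h : ZFClosure G S v) :
    ∃ τ, v ∈ iterS G S τ ∧ ∀ j < τ, v ∉ iterS G S j := by
  classical
  have hex : ∃ k, v ∈ iterS G S k := (closure_iff_iterS G S v).mp h
  exact ⟨Nat.find hex, Nat.find_spec hex, fun j hj => Nat.find_min hex hj⟩

theorem force_at {v : V} {k : ℕ} (h1 : v ∈ iterS G S (k+1)) (h2 : v ∉ iterS G S k) :
    ∃ w ∈ iterS G S k, G.Adj w v ∧ ∀ u, G.Adj w u → u ≠ v → u ∈ iterS G S k := by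
  rcases h1 with h | ⟨w, hw, hadj, hprem⟩
  · exact absurd h h2
  · exact ⟨w, hw, hadj, hprem⟩

end TimeMachinery

section Restriction

variable {n : ℕ}

/-- restriction of the closure of the big hat graph to a sub-copy, with the
middle vertex replaced by the pendant (which is taken black) -/
theorem restrict (S : Set (Option (GV (n+1)))) (b c : Bool) :
    ∀ v, ZFClosure (hatGtree (n+1)) S v → ∀ x, v = cp b c x →
      ZFClosure (hatGtree n) (some '' {y | cp b c y ∈ S} ∪ {none}) (some x) := by
  intro v h
  induction h with
  | init v hv =>
      rintro x rfl
      exact .init _ (Or.inl ⟨x, hv, rfl⟩)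
  | force u w hadj hw hprem ihw ihprem =>
      rintro x rfl
      have hadj' := hadj.symm
      rcases NB1.mp hadj' with ⟨y, rfl, hxy⟩ | ⟨rfl, rfl⟩
      · -- internal forcer
        refine .force (some x) (some y)
          (hat_adj_some_some.mpr hxy.symm) (ihw y rfl) ?_
        intro v' hv' hne
        rcases hat_adj_some_iff.mp hv' with ⟨y', rfl, hyy'⟩ | ⟨-, rfl⟩
        · refine ihprem (cp b c y') ?_ ?_ y' rfl
          · exact NB1.mpr (Or.inl ⟨y', rfl, hyy'⟩)
          · intro hh
            simp only [cp, Option.some.injEq, GV.child.injEq] at hh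
            exact hne (congrArg some hh.2.2)
        · exact .init _ (Or.inr rfl)
      · -- forced from outside: the forcer is the middle vertex, in the small
        -- graph the pendant (initially black) forces the root
        refine .force (some (rootV n)) none (hat_adj_none.mpr rfl)
          (.init _ (Or.inr rfl)) ?_
        intro v' hv' hne
        rw [hat_adj_none] at hv'
        exact absurd hv' hne
  
end Restriction
section Tracked

variable {n : ℕ}

theorem tracked (S : Set (Option (GV (n+1)))) (b c : Bool) :
    ∀ k x, cp b c x ∈ iterS (hatGtree (n+1)) S k →
      x = rootV n ∨
      ZFClosure (hatGtree n) (some '' {y | cp b c y ∈ S}) (some x) ∨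
      ∃ j, j < k ∧ cp b c (rootV n) ∈ iterS (hatGtree (n+1)) S j := by
  intro k
  induction k with
  | zero =>
      intro x hx
      exact Or.inr (Or.inl (.init _ ⟨x, hx, rfl⟩))
  | succ k ih =>
      intro x hx
      rcases hx with hold | ⟨w, hw, hadj, hprem⟩
      · rcases ih x hold with h | h | ⟨j, hj, hmem⟩
        · exact Or.inl h
        · exact Or.inr (Or.inl h)
        · exact Or.inr (Or.inr ⟨j, by omega, hmem⟩)
      · by_cases h3 : ∃ j, j < k + 1 ∧ cp b c (rootV n) ∈ iterS (hatGtree (n+1)) S j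
        · exact Or.inr (Or.inr h3)
        · rcases NB1.mp hadj.symm with ⟨y, rfl, hxy⟩ | ⟨hxr, -⟩
          · -- internal forcer `some y`
            by_cases hyr : y = rootV n
            · exact absurd ⟨k, by omega, by rw [← hyr]; exact hw⟩ h3
            · have hyClo : ZFClosure (hatGtree n) (some '' {y | cp b c y ∈ S}) (some y) := by
                rcases ih y hw with h | h | ⟨j, hj, hmem⟩
                · exact absurd h hyr
                · exact h
                · exact absurd ⟨j, by omega, hmem⟩ h3
              refine Or.inr (Or.inl (.force (some x) (some y)
                (hat_adj_some_some.mpr hxy.symm) hyClo ?_))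
              intro v' hv' hne
              rcases hat_adj_some_iff.mp hv' with ⟨y', rfl, hyy'⟩ | ⟨hyy, -⟩
              · have hmem : cp b c y' ∈ iterS (hatGtree (n+1)) S k := by
                  refine hprem (cp b c y') (NB1.mpr (Or.inl ⟨y', rfl, hyy'⟩)) ?_
                  intro hh
                  simp only [cp, Option.some.injEq, GV.child.injEq] at hh
                  exact hne (congrArg some hh.2.2)
                rcases ih y' hmem with h | h | ⟨j, hj, hmem'⟩
                · exact absurd ⟨k, by omega, by rw [← h]; exact hmem⟩ h3
                · exact h
                · exact absurd ⟨j, by omega, hmem'⟩ h3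
              · exact absurd hyy hyr
          · exact Or.inl hxr

theorem cp_ne_root {b c : Bool} {x : GV n} : cp b c x ≠ Rv n := by
  simp only [cp, Rv, ne_eq, Option.some.injEq]
  exact fun h => nomatch h

theorem cp_ne_mid {b c b' : Bool} {x : GV n} : cp b c x ≠ Mv n b' := by
  simp only [cp, Mv, ne_eq, Option.some.injEq]
  exact fun h => nomatch h

theorem small_fact {S : Set (Option (GV (n+1)))} {X : Set (GV (n+1))} (b c : Bool)
    (hL4 : L4 n) (hL5 : L5 n)
    (hSX : ∀ y : GV n, cp b c y ∈ S ↔ GV.child b c y ∈ X)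
    (hfull : ∀ x : GV n,
      ZFClosure (hatGtree n) (some '' {y | GV.child b c y ∈ X} ∪ {none}) (some x))
    (hsize : ({y | GV.child b c y ∈ X}).ncard ≤ tseq n)
    (hr : ZFClosure (hatGtree (n+1)) S (cp b c (rootV n))) :
    ∃ τ, 0 < τ ∧ (∀ j, j < τ → cp b c (rootV n) ∉ iterS (hatGtree (n+1)) S j) ∧
      Rv n ∈ iterS (hatGtree (n+1)) S (τ - 1) ∧
      cp b (!c) (rootV n) ∈ iterS (hatGtree (n+1)) S (τ - 1) ∧
      Mv n b ∈ iterS (hatGtree (n+1)) S (τ - 1) := by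
  have hset : {y | cp b c y ∈ S} = {y | GV.child b c y ∈ X} := Set.ext fun y => hSX y
  obtain ⟨τ, hmem, hmin⟩ := exists_first hr
  cases τ with
  | zero =>
      exfalso
      have : rootV n ∈ {y | GV.child b c y ∈ X} := (hSX _).mp hmem
      have := hL4 _ hfull this
      omega
  | succ j =>
      obtain ⟨w, hw, hadj, hprem⟩ := force_at hmem (hmin j (by omega))
      rcases NB1.mp hadj.symm with ⟨y, rfl, hry⟩ | ⟨-, rfl⟩
      · -- internal forcer: the root would lie in the pendant-free closure
        exfalso
        have hyr : y ≠ rootV n := fun h => (Gtree n).loopless.irrefl _ (h ▸ hry)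
        have hyClo : ZFClosure (hatGtree n) (some '' {y | cp b c y ∈ S}) (some y) := by
          rcases tracked S b c j y hw with h | h | ⟨j', hj', hmem'⟩
          · exact absurd h hyr
          · exact h
          · exact absurd hmem' (hmin j' (by omega))
        have hrootClo : ZFClosure (hatGtree n) (some '' {y | cp b c y ∈ S})
            (some (rootV n)) := by
          refine .force _ (some y) (hat_adj_some_some.mpr hry.symm) hyClo ?_
          intro v' hv' hne
          rcases hat_adj_some_iff.mp hv' with ⟨y', rfl, hyy'⟩ | ⟨hyy, -⟩
          · have hmem' : cp b c y' ∈ iterS (hatGtree (n+1)) S j := by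
              refine hprem (cp b c y') (NB1.mpr (Or.inl ⟨y', rfl, hyy'⟩)) ?_
              intro hh
              simp only [cp, Option.some.injEq, GV.child.injEq] at hh
              exact hne (congrArg some hh.2.2)
            rcases tracked S b c j y' hmem' with h | h | ⟨j', hj', hmem''⟩
            · exact absurd hmem' (h ▸ hmin j (by omega))
            · exact h
            · exact absurd hmem'' (hmin j' (by omega))
          · exact absurd hyy hyr
        rw [hset] at hrootClo
        have := hL5 _ hfull hrootClo
        omega
      · -- the forcer is the middle vertex
        refine ⟨j + 1, by omega, hmin, ?_, ?_, ?_⟩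
        · exact hprem (Rv n) (NB2.mpr (Or.inl rfl)) (fun h => cp_ne_root h.symm)
        · refine hprem _ (NB2.mpr (Or.inr ⟨!c, rfl⟩)) ?_
          intro hh
          simp only [cp, Option.some.injEq, GV.child.injEq] at hh
          cases c <;> simp at hh
        · exact hw

end Tracked
section Partition

variable {n : ℕ}

def Xbc (X : Set (GV (n+1))) (b c : Bool) : Set (GV n) := {y | GV.child b c y ∈ X}

def specSet (n : ℕ) : Set (GV (n+1)) := {GV.root, GV.mid true, GV.mid false}

theorem child_inj (b c : Bool) : Function.Injective (GV.child b c : GV n → GV (n+1)) := by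
  intro x y h
  simp only [GV.child.injEq] at h
  exact h.2.2

theorem decomp (X : Set (GV (n+1))) :
    X = (GV.child true true '' Xbc X true true) ∪ (GV.child true false '' Xbc X true false)
      ∪ (GV.child false true '' Xbc X false true)
      ∪ (GV.child false false '' Xbc X false false) ∪ (X ∩ specSet n) := by
  ext z
  simp only [Set.mem_union, Set.mem_image, Set.mem_inter_iff, Xbc, specSet,
    Set.mem_insert_iff, Set.mem_singleton_iff, Set.mem_setOf_eq]
  constructor
  · intro hz
    cases z with
    | root => exact Or.inr ⟨hz, Or.inl rfl⟩
    | mid b =>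
        cases b
        · exact Or.inr ⟨hz, Or.inr (Or.inr rfl)⟩
        · exact Or.inr ⟨hz, Or.inr (Or.inl rfl)⟩
    | child b c y =>
        cases b <;> cases c
        · exact Or.inl (Or.inr ⟨y, hz, rfl⟩)
        · exact Or.inl (Or.inl (Or.inr ⟨y, hz, rfl⟩))
        · exact Or.inl (Or.inl (Or.inl (Or.inr ⟨y, hz, rfl⟩)))
        · exact Or.inl (Or.inl (Or.inl (Or.inl ⟨y, hz, rfl⟩)))
  · rintro ((((⟨y, hy, rfl⟩ | ⟨y, hy, rfl⟩) | ⟨y, hy, rfl⟩) | ⟨y, hy, rfl⟩) | ⟨hz, -⟩)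
    · exact hy
    · exact hy
    · exact hy
    · exact hy
    · exact hz

theorem img_disj {b c b' c' : Bool} (hne : (b, c) ≠ (b', c')) (F F' : Set (GV n)) :
    Disjoint (GV.child b c '' F) (GV.child b' c' '' F') := by
  rw [Set.disjoint_left]
  rintro a ⟨x, -, rfl⟩ ⟨y, -, h⟩
  simp only [GV.child.injEq] at h
  exact hne (by rw [h.1, h.2.1])

theorem img_disj_spec (b c : Bool) (F : Set (GV n)) (X : Set (GV (n+1))) :
    Disjoint (GV.child b c '' F) (X ∩ specSet n) := by
  rw [Set.disjoint_left]
  rintro a ⟨x, -, rfl⟩ ⟨-, hs⟩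
  rcases hs with h | h | h <;> simp at h

theorem partition_ncard (X : Set (GV (n+1))) :
    X.ncard = (Xbc X true true).ncard + (Xbc X true false).ncard +
      (Xbc X false true).ncard + (Xbc X false false).ncard + (X ∩ specSet n).ncard := by
  conv_lhs => rw [decomp X]
  rw [Set.ncard_union_eq (by
    rw [Set.disjoint_union_left, Set.disjoint_union_left, Set.disjoint_union_left]
    exact ⟨⟨⟨img_disj_spec _ _ _ _, img_disj_spec _ _ _ _⟩, img_disj_spec _ _ _ _⟩,
      img_disj_spec _ _ _ _⟩) (Set.toFinite _) (Set.toFinite _)]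
  rw [Set.ncard_union_eq (by
    rw [Set.disjoint_union_left, Set.disjoint_union_left]
    exact ⟨⟨img_disj (by decide) _ _, img_disj (by decide) _ _⟩, img_disj (by decide) _ _⟩)
    (Set.toFinite _) (Set.toFinite _)]
  rw [Set.ncard_union_eq (by
    rw [Set.disjoint_union_left]
    exact ⟨img_disj (by decide) _ _, img_disj (by decide) _ _⟩)
    (Set.toFinite _) (Set.toFinite _)]
  rw [Set.ncard_union_eq (img_disj (by decide) _ _) (Set.toFinite _) (Set.toFinite _)]
  rw [Set.ncard_image_of_injective _ (child_inj _ _), Set.ncard_image_of_injective _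
    (child_inj _ _), Set.ncard_image_of_injective _ (child_inj _ _),
    Set.ncard_image_of_injective _ (child_inj _ _)]

end Partition

section LowerStep

variable {n : ℕ}

theorem cp_mem_black {X : Set (GV (n+1))} {b c : Bool} {y : GV n} :
    cp b c y ∈ (some '' X ∪ {none} : Set (Option (GV (n+1)))) ↔ GV.child b c y ∈ X := by
  simp [cp]

theorem cp_mem_white {X : Set (GV (n+1))} {b c : Bool} {y : GV n} :
    cp b c y ∈ (some '' X : Set (Option (GV (n+1)))) ↔ GV.child b c y ∈ X := by
  simp [cp]

theorem exists_first_le {V : Type} {G : SimpleGraph V} {S : Set V} {v : V} {k : ℕ}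
    (h : v ∈ iterS G S k) :
    ∃ τ, τ ≤ k ∧ v ∈ iterS G S τ ∧ ∀ j < τ, v ∉ iterS G S j := by
  classical
  have hex : ∃ m, v ∈ iterS G S m := ⟨k, h⟩
  exact ⟨Nat.find hex, Nat.find_le h, Nat.find_spec hex, fun j hj => Nat.find_min hex hj⟩

theorem copyfull_of_full {X : Set (GV (n+1))}
    (hfull : ∀ x, ZFClosure (hatGtree (n+1)) (some '' X ∪ {none}) (some x)) (b c : Bool) :
    ∀ x : GV n, ZFClosure (hatGtree n) (some '' Xbc X b c ∪ {none}) (some x) := by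
  intro x
  have h := restrict (some '' X ∪ {none}) b c _ (hfull (.child b c x)) x rfl
  have hset : {y | cp b c y ∈ (some '' X ∪ {none} : Set (Option (GV (n+1))))} = Xbc X b c :=
    Set.ext fun y => cp_mem_black
  rwa [hset] at h

/-- two sub-copies of minimum weight attached to the same middle vertex are
impossible -/
theorem shared_mid_contra (hL3 : L3 n) (hL4 : L4 n) (hL5 : L5 n) {X : Set (GV (n+1))}
    (hfull : ∀ x, ZFClosure (hatGtree (n+1)) (some '' X ∪ {none}) (some x)) (b : Bool)
    (hsmall : ∀ c, (Xbc X b c).ncard ≤ tseq n) : False := by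
  have hSX : ∀ c (y : GV n),
      cp b c y ∈ (some '' X ∪ {none} : Set (Option (GV (n+1)))) ↔ GV.child b c y ∈ X :=
    fun c y => cp_mem_black
  obtain ⟨τ₁, hτ₁pos, hτ₁min, -, hsib₁, -⟩ :=
    small_fact b true hL4 hL5 (hSX true) (copyfull_of_full hfull b true) (hsmall true)
      (hfull (.child b true (rootV n)))
  obtain ⟨τ₂, hτ₂pos, hτ₂min, -, hsib₂, -⟩ :=
    small_fact b false hL4 hL5 (hSX false) (copyfull_of_full hfull b false) (hsmall false)
      (hfull (.child b false (rootV n)))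
  -- `hsib₁ : cp b false root ∈ iter (τ₁ - 1)`, so `τ₂ ≤ τ₁ - 1`, and symmetrically
  have h1 : τ₂ ≤ τ₁ - 1 := by
    by_contra hcon
    exact hτ₂min (τ₁ - 1) (by omega) hsib₁
  have h2 : τ₁ ≤ τ₂ - 1 := by
    by_contra hcon
    exact hτ₁min (τ₂ - 1) (by omega) hsib₂
  omega

theorem lower_step (hL3 : L3 n) (hL4 : L4 n) (hL5 : L5 n) :
    L3 (n+1) ∧ L4 (n+1) ∧ L5 (n+1) := by
  have hsizes : ∀ (X : Set (GV (n+1))),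
      (∀ x, ZFClosure (hatGtree (n+1)) (some '' X ∪ {none}) (some x)) →
      ∀ b c, tseq n ≤ (Xbc X b c).ncard :=
    fun X hfull b c => hL3 _ (copyfull_of_full hfull b c)
  have ht : tseq (n+1) = 4 * tseq n + 2 := rfl
  have hL3' : L3 (n+1) := by
    intro X hfull
    by_contra hlt
    push_neg at hlt
    have hpart := partition_ncard X
    have hs := hsizes X hfull
    have h4 : (Xbc X true true).ncard = tseq n ∧ (Xbc X true false).ncard = tseq n ∨
        (Xbc X false true).ncard = tseq n ∧ (Xbc X false false).ncard = tseq n := by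
      have := hs true true
      have := hs true false
      have := hs false true
      have := hs false false
      omega
    rcases h4 with ⟨h1, h2⟩ | ⟨h1, h2⟩
    · exact shared_mid_contra hL3 hL4 hL5 hfull true
        (fun c => by cases c <;> omega)
    · exact shared_mid_contra hL3 hL4 hL5 hfull false
        (fun c => by cases c <;> omega)
  have hL4' : L4 (n+1) := by
    intro X hfull hroot
    by_contra hlt
    push_neg at hlt
    have hpart := partition_ncard X
    have hs := hsizes X hfull
    have hspec : 1 ≤ (X ∩ specSet n).ncard := by
      rw [Nat.one_le_iff_ne_zero]
      intro h0
      have := (Set.ncard_eq_zero (Set.toFinite _)).mp h0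
      have : GV.root ∈ (∅ : Set (GV (n+1))) := this ▸ ⟨hroot, Or.inl rfl⟩
      exact this
    have h4 : (Xbc X true true).ncard = tseq n ∧ (Xbc X true false).ncard = tseq n ∨
        (Xbc X false true).ncard = tseq n ∧ (Xbc X false false).ncard = tseq n := by
      have := hs true true
      have := hs true false
      have := hs false true
      have := hs false false
      omega
    rcases h4 with ⟨h1, h2⟩ | ⟨h1, h2⟩
    · exact shared_mid_contra hL3 hL4 hL5 hfull true (fun c => by cases c <;> omega)
    · exact shared_mid_contra hL3 hL4 hL5 hfull false (fun c => by cases c <;> omega)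
  refine ⟨hL3', hL4', ?_⟩
  intro X hfull hroot
  by_contra hlt
  push_neg at hlt
  by_cases hrootX : GV.root ∈ X
  · have := hL4' X hfull hrootX
    omega
  have hpart := partition_ncard X
  have hs := hsizes X hfull
  -- either some middle vertex has two minimum sub-copies (contradiction), or
  -- there is exactly one minimum sub-copy on each side and no special vertices
  by_cases hsh : ((Xbc X true true).ncard = tseq n ∧ (Xbc X true false).ncard = tseq n) ∨
      ((Xbc X false true).ncard = tseq n ∧ (Xbc X false false).ncard = tseq n)
  · rcases hsh with ⟨h1, h2⟩ | ⟨h1, h2⟩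
    · exact shared_mid_contra hL3 hL4 hL5 hfull true (fun c => by cases c <;> omega)
    · exact shared_mid_contra hL3 hL4 hL5 hfull false (fun c => by cases c <;> omega)
  push_neg at hsh
  have hspec0 : (X ∩ specSet n).ncard = 0 := by
    have := hs true true
    have := hs true false
    have := hs false true
    have := hs false false
    omega
  have hspecempty : X ∩ specSet n = ∅ := (Set.ncard_eq_zero (Set.toFinite _)).mp hspec0
  have hsmallside : ∀ b : Bool, ∃ c : Bool, (Xbc X b c).ncard ≤ tseq n := by
    intro b
    cases b
    · rcases Nat.lt_or_ge (Xbc X false true).ncard (tseq n + 1) with h | h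
      · exact ⟨true, by omega⟩
      · refine ⟨false, ?_⟩
        have := hs true true
        have := hs true false
        have := hs false false
        omega
    · rcases Nat.lt_or_ge (Xbc X true true).ncard (tseq n + 1) with h | h
      · exact ⟨true, by omega⟩
      · refine ⟨false, ?_⟩
        have := hs false true
        have := hs false false
        have := hs true false
        omega
  -- now the endgame in the pendant-free ("white") system
  obtain ⟨τR, hmemR, hminR⟩ := exists_first hroot
  have hτRpos : τR ≠ 0 := by
    intro h0
    rw [h0] at hmemR
    obtain ⟨z, hz, hze⟩ := hmemR
    have : z = GV.root := Option.some_injective _ hze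
    rw [this] at hz
    exact hrootX hz
  obtain ⟨j, rfl⟩ : ∃ j, τR = j + 1 := ⟨τR - 1, by omega⟩
  obtain ⟨w, hw, hadj, hprem⟩ := force_at hmemR (hminR j (by omega))
  have hadj' : (hatGtree (n+1)).Adj (Rv n) w := hadj.symm
  rcases NB3.mp hadj' with rfl | ⟨b, rfl⟩
  · -- the pendant cannot force the root first
    obtain ⟨τP, hτPle, hmemP, hminP⟩ := exists_first_le hw
    have hτPpos : τP ≠ 0 := by
      intro h0
      rw [h0] at hmemP
      obtain ⟨z, -, hze⟩ := hmemP
      exact nomatch hze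
    obtain ⟨i, rfl⟩ : ∃ i, τP = i + 1 := ⟨τP - 1, by omega⟩
    obtain ⟨w', hw', hadj2, -⟩ := force_at hmemP (hminP i (by omega))
    have : w' = Rv n := NB4.mp hadj2.symm
    rw [this] at hw'
    exact hminR i (by omega) hw'
  · -- the root is first forced by a middle vertex; use the minimum sub-copy on
    -- that side
    obtain ⟨c', hc'⟩ := hsmallside b
    have hrW : cp b c' (rootV n) ∈ iterS (hatGtree (n+1)) (some '' X) j :=
      hprem _ (NB2.mpr (Or.inr ⟨c', rfl⟩)) cp_ne_root
    obtain ⟨τs, hτspos, hτsmin, hRs, -, -⟩ :=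
      small_fact (S := some '' X) b c' hL4 hL5 (fun y => cp_mem_white)
        (copyfull_of_full hfull b c') hc'
        (iterS_subset_closure _ _ j _ hrW)
    have hτsle : τs ≤ j := by
      by_contra hcon
      exact hτsmin j (by omega) hrW
    exact hminR (τs - 1) (by omega) hRs

end LowerStep
section Assembly

variable {n : ℕ}

theorem Pn_all (n : ℕ) : U1 n ∧ U2 n ∧ L3 n ∧ L4 n ∧ L5 n := by
  induction n with
  | zero => exact ⟨U1_base, U2_base, L3_base, L4_base, L5_base⟩
  | succ n ih =>
      obtain ⟨hU1, hU2, hL3, hL4, hL5⟩ := ih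
      obtain ⟨hU1', hU2'⟩ := upper_step hU1 hU2
      obtain ⟨hL3', hL4', hL5'⟩ := lower_step hL3 hL4 hL5
      exact ⟨hU1', hU2', hL3', hL4', hL5'⟩

theorem isCopy_id : IsCopy n (Gtree n) id := by
  refine ⟨fun x y h => h, fun x y => Iff.rfl, ?_⟩
  intro x u hadj hny
  exact absurd rfl (hny u)

theorem isCopy_some : IsCopy n (hatGtree n) some := by
  refine ⟨fun x y h => Option.some_injective _ h, fun x y => hat_adj_some_some, ?_⟩
  intro x u hadj hny
  cases u with
  | none => exact hat_adj_some_none.mp hadj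
  | some z => exact absurd rfl (hny z)

/-- transfer of forcing from `G_n` to `Ĝ_n` with the pendant already black -/
theorem toHat (S : Set (GV n)) :
    ∀ v, ZFClosure (Gtree n) S v →
      ZFClosure (hatGtree n) (some '' S ∪ {none}) (some v) := by
  intro v h
  induction h with
  | init v hv => exact .init _ (Or.inl ⟨v, hv, rfl⟩)
  | force u w hadj hw hprem ihw ihprem =>
      refine .force (some u) (some w) (hat_adj_some_some.mpr hadj) ihw ?_
      intro v' hv' hne
      rcases hat_adj_some_iff.mp hv' with ⟨y, rfl, hy⟩ | ⟨-, rfl⟩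
      · exact ihprem y hy (fun h => hne (congrArg some h))
      · exact .init _ (Or.inr rfl)

/-- transfer of forcing from `G_n` to `Ĝ_n` with the pendant white: either the
vertex is forced, or at least the root is -/
theorem toHatRoot (S : Set (GV n)) :
    ∀ v, ZFClosure (Gtree n) S v →
      ZFClosure (hatGtree n) (some '' S) (some v) ∨
      ZFClosure (hatGtree n) (some '' S) (some (rootV n)) := by
  intro v h
  induction h with
  | init v hv => exact Or.inl (.init _ ⟨v, hv, rfl⟩)
  | force u w hadj hw hprem ihw ihprem =>
      by_cases hR : ZFClosure (hatGtree n) (some '' S) (some (rootV n))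
      · exact Or.inr hR
      · rcases ihw with hwCl | hwCl
        swap
        · exact absurd hwCl hR
        by_cases hwr : w = rootV n
        · exact absurd (hwr ▸ hwCl) hR
        refine Or.inl (.force (some u) (some w) (hat_adj_some_some.mpr hadj) hwCl ?_)
        intro v' hv' hne
        rcases hat_adj_some_iff.mp hv' with ⟨y, rfl, hy⟩ | ⟨hwr', -⟩
        · rcases ihprem y hy (fun h => hne (congrArg some h)) with h | h
          · exact h
          · exact absurd h hR
        · exact absurd hwr' hwr

theorem zfn_le {V : Type} (G : SimpleGraph V) (S : Set V) (k : ℕ) (hcard : S.ncard = k)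
    (hf : IsZeroForcingSet G S) : zeroForcingNumber G ≤ k :=
  Nat.sInf_le ⟨S, hcard, hf⟩

theorem zfn_ge {V : Type} (G : SimpleGraph V) (k : ℕ)
    (hne : ∃ S : Set V, IsZeroForcingSet G S)
    (h : ∀ S : Set V, IsZeroForcingSet G S → k ≤ S.ncard) : k ≤ zeroForcingNumber G := by
  obtain ⟨S, hS⟩ := hne
  refine le_csInf ⟨S.ncard, S, rfl, hS⟩ ?_
  rintro m ⟨T, rfl, hT⟩
  exact h T hT

theorem main_both (n : ℕ) :
    zeroForcingNumber (Gtree n) = tseq n + 1 ∧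
    zeroForcingNumber (hatGtree n) = tseq n + 1 := by
  obtain ⟨⟨W, hWcard, hWprop⟩, -, hL3, -, hL5⟩ := Pn_all n
  -- the two upper-bound forcing sets
  have hGforce : IsZeroForcingSet (Gtree n) ↑W := by
    intro v
    exact hWprop (GV n) (Gtree n) id ↑W isCopy_id (fun w hw => .init _ hw) v
  have hHsome : ∀ x, ZFClosure (hatGtree n) (some '' ↑W) (some x) :=
    hWprop (Option (GV n)) (hatGtree n) some (some '' ↑W) isCopy_some
      (fun w hw => .init _ ⟨w, hw, rfl⟩)
  have hHforce : IsZeroForcingSet (hatGtree n) (some '' ↑W) := by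
    intro v
    cases v with
    | some x => exact hHsome x
    | none =>
        refine .force none (some (rootV n)) (hat_adj_some_none.mpr rfl)
          (hHsome _) ?_
        intro v' hv' hne
        rcases hat_adj_some_iff.mp hv' with ⟨y, rfl, -⟩ | ⟨-, rfl⟩
        · exact hHsome y
        · exact absurd rfl hne
  -- lower bounds
  have hGlower : ∀ S : Set (GV n), IsZeroForcingSet (Gtree n) S → tseq n + 1 ≤ S.ncard := by
    intro S hS
    have hfull : ∀ x, ZFClosure (hatGtree n) (some '' S ∪ {none}) (some x) :=
      fun x => toHat S x (hS x)
    have hroot : ZFClosure (hatGtree n) (some '' S) (some (rootV n)) := by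
      rcases toHatRoot S (rootV n) (hS (rootV n)) with h | h <;> exact h
    exact hL5 S hfull hroot
  have hHlower : ∀ S : Set (Option (GV n)), IsZeroForcingSet (hatGtree n) S →
      tseq n + 1 ≤ S.ncard := by
    intro S hS
    by_cases hnone : none ∈ S
    · have hXS : some '' (some ⁻¹' S) ∪ {none} = S := by
        ext z
        cases z with
        | none => simp [hnone]
        | some x => simp
      have hfull : ∀ x, ZFClosure (hatGtree n) (some '' (some ⁻¹' S) ∪ {none}) (some x) := by
        intro x
        rw [hXS]
        exact hS (some x)
      have h3 := hL3 _ hfull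
      have hdisj : Disjoint (some '' (some ⁻¹' S) : Set (Option (GV n))) {none} := by
        rw [Set.disjoint_left]
        rintro a ⟨x, -, rfl⟩ ha
        simp at ha
      have hcard : S.ncard = (some ⁻¹' S : Set (GV n)).ncard + 1 := by
        conv_lhs => rw [← hXS]
        rw [Set.ncard_union_eq hdisj (Set.toFinite _) (Set.toFinite _),
          Set.ncard_image_of_injective _ (Option.some_injective _), Set.ncard_singleton]
      omega
    · have hXS : some '' (some ⁻¹' S) = S := by
        ext z
        cases z with
        | none => simp [hnone]
        | some x => simp
      have hfull : ∀ x, ZFClosure (hatGtree n) (some '' (some ⁻¹' S) ∪ {none}) (some x) := by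
        intro x
        refine ZFClosure.mono _ ?_ (hS (some x))
        rw [hXS]
        exact Set.subset_union_left
      have hroot : ZFClosure (hatGtree n) (some '' (some ⁻¹' S)) (some (rootV n)) := by
        rw [hXS]
        cases hS none with
        | init _ hv => exact absurd hv hnone
        | force u w hadj hw hprem =>
            have : w = some (rootV n) := hat_adj_none.mp hadj.symm
            rwa [this] at hw
      have h5 := hL5 _ hfull hroot
      have hcard : S.ncard = (some ⁻¹' S : Set (GV n)).ncard := by
        conv_lhs => rw [← hXS]
        rw [Set.ncard_image_of_injective _ (Option.some_injective _)]
      omega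
  constructor
  · refine le_antisymm (zfn_le _ ↑W (tseq n + 1) ?_ hGforce)
      (zfn_ge _ _ ⟨↑W, hGforce⟩ hGlower)
    rw [Set.ncard_coe_finset, hWcard]
  · refine le_antisymm (zfn_le _ (some '' ↑W) (tseq n + 1) ?_ hHforce)
      (zfn_ge _ _ ⟨some '' ↑W, hHforce⟩ hHlower)
    rw [Set.ncard_image_of_injective _ (Option.some_injective _),
      Set.ncard_coe_finset, hWcard]

end Assembly

/-- `Z(G_{n+1}) = Z(Ĝ_{n+1}) = t_{n+1} + 1`. -/
theorem zeroForcingNumber_Gtree (n : ℕ) :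
    zeroForcingNumber (Gtree n) = tseq n + 1 ∧
    zeroForcingNumber (hatGtree n) = tseq n + 1 := main_both n
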